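/- Let M_k = (X_k, 𝒯_k, ≤_k, d_k), k in a finite index set A, be spacetimes with finite distances d_k, and let p ∈ (0,1]. On X = Π_k X_k with the product topology and product order, define d(x,y) := (Σ_k d_k(x_k,y_k)^p)^{1/p} when x ≤ y and d(x,y) := 0 otherwise. Then d satisfies the reverse triangle inequality d(x,y) + d(y,z) ≤ d(x,z) for all x ≤ y ≤ z, and d is upper semi-continuous on X × X. -/

import Mathlib

open scoped ENNReal

-- Binary 2D Minkowski: the ℓ^q "norm" N(a,b) = (a^q+b^q)^(1/q) is subadditive for q ≥ 1.
private lemma two_dim_minkowski {q : ℝ} (hq : 1 ≤ q) (a₁ b₁ a₂ b₂ : ℝ≥0∞) :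
    ((a₁ + a₂) ^ q + (b₁ + b₂) ^ q) ^ (1 / q) ≤
      (a₁ ^ q + b₁ ^ q) ^ (1 / q) + (a₂ ^ q + b₂ ^ q) ^ (1 / q) := by
  have h := ENNReal.Lp_add_le (Finset.univ : Finset Bool)
      (fun i => if i then a₁ else b₁) (fun i => if i then a₂ else b₂) hq
  simpa [Fintype.sum_bool] using h

-- Generalized Minkowski: ℓ^q norm (2D) of a finite sum of vectors ≤ sum of norms.
private lemma sum_two_dim_minkowski {ι : Type*} {q : ℝ} (hq : 1 ≤ q)
    (s : Finset ι) (a b : ι → ℝ≥0∞) :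
    ((∑ k ∈ s, a k) ^ q + (∑ k ∈ s, b k) ^ q) ^ (1 / q) ≤
      ∑ k ∈ s, (a k ^ q + b k ^ q) ^ (1 / q) := by
  have hq0 : 0 < q := lt_of_lt_of_le zero_lt_one hq
  classical
  induction s using Finset.induction_on with
  | empty => simp [ENNReal.zero_rpow_of_pos hq0, ENNReal.zero_rpow_of_pos (one_div_pos.mpr hq0), hq0]
  | @insert x t hx ih =>
      rw [Finset.sum_insert hx, Finset.sum_insert hx, Finset.sum_insert hx]
      calc ((a x + ∑ k ∈ t, a k) ^ q + (b x + ∑ k ∈ t, b k) ^ q) ^ (1 / q)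
          ≤ (a x ^ q + b x ^ q) ^ (1 / q)
              + ((∑ k ∈ t, a k) ^ q + (∑ k ∈ t, b k) ^ q) ^ (1 / q) :=
            two_dim_minkowski hq _ _ _ _
        _ ≤ (a x ^ q + b x ^ q) ^ (1 / q) + ∑ k ∈ t, (a k ^ q + b k ^ q) ^ (1 / q) :=
            add_le_add le_rfl ih

-- Reverse Minkowski inequality for p ∈ (0,1].
private lemma rev_minkowski {ι : Type*} [Fintype ι] {p : ℝ} (hp0 : 0 < p) (hp1 : p ≤ 1)
    (u v : ι → ℝ≥0∞) :
    (∑ k, u k ^ p) ^ (1 / p) + (∑ k, v k ^ p) ^ (1 / p) ≤ (∑ k, (u k + v k) ^ p) ^ (1 / p) := by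
  set q : ℝ := 1 / p with hqdef
  have hq : 1 ≤ q := by
    rw [hqdef, le_div_iff₀ hp0]; linarith
  have hq0 : 0 < q := lt_of_lt_of_le zero_lt_one hq
  have hpq : p * q = 1 := by
    rw [hqdef, mul_one_div_cancel hp0.ne']
  have key : ((∑ k, u k ^ p) ^ q + (∑ k, v k ^ p) ^ q) ^ (1 / q) ≤
      ∑ k, ((u k ^ p) ^ q + (v k ^ p) ^ q) ^ (1 / q) :=
    sum_two_dim_minkowski hq Finset.univ _ _
  have huq : ∀ k, (u k ^ p) ^ q = u k := fun k => by
    rw [← ENNReal.rpow_mul, hpq, ENNReal.rpow_one]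
  have hvq : ∀ k, (v k ^ p) ^ q = v k := fun k => by
    rw [← ENNReal.rpow_mul, hpq, ENNReal.rpow_one]
  have h1q : (1:ℝ) / q = p := by
    rw [hqdef]; field_simp
  simp only [huq, hvq, h1q] at key
  -- key : ((∑ u^p)^q + (∑ v^p)^q)^p ≤ ∑ (u+v)^p
  have := ENNReal.rpow_le_rpow key (le_of_lt hq0)
  rw [← ENNReal.rpow_mul] at this
  have hpq' : p * q = 1 := hpq
  rw [hpq', ENNReal.rpow_one] at this
  exact le_trans (le_of_eq rfl) this

theorem stmt12 {A : Type*} [Fintype A] {X : A → Type*} [∀ k, TopologicalSpace (X k)]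
    (p : ℝ) (hp0 : 0 < p) (hp1 : p ≤ 1)
    (le : ∀ k, X k → X k → Prop)
    (hrefl : ∀ k x, le k x x)
    (htrans : ∀ k x y z, le k x y → le k y z → le k x z)
    (hclosed : ∀ k, IsClosed {q : X k × X k | le k q.1 q.2})
    (d : ∀ k, X k → X k → ℝ≥0∞)
    (hfin : ∀ k x y, d k x y ≠ ⊤)
    (husc : ∀ k, UpperSemicontinuous (fun q : X k × X k => d k q.1 q.2))
    (hvanish : ∀ k x y, ¬ le k x y → d k x y = 0)
    (hrev : ∀ k x y z, le k x y → le k y z → d k x y + d k y z ≤ d k x z)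
    (leP : (∀ k, X k) → (∀ k, X k) → Prop)
    (hleP : ∀ x y, leP x y ↔ ∀ k, le k (x k) (y k))
    (dP : (∀ k, X k) → (∀ k, X k) → ℝ≥0∞)
    (hdP₁ : ∀ x y, leP x y → dP x y = (∑ k, (d k (x k) (y k)) ^ p) ^ (1 / p))
    (hdP₂ : ∀ x y, ¬ leP x y → dP x y = 0) :
    (∀ x y z, leP x y → leP y z → dP x y + dP y z ≤ dP x z) ∧
    UpperSemicontinuous (fun q : (∀ k, X k) × (∀ k, X k) => dP q.1 q.2) := by
  constructor
  · -- reverse triangle inequality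
    intro x y z hxy hyz
    have hxz : leP x z := by
      rw [hleP] at *
      exact fun k => htrans k _ _ _ (hxy k) (hyz k)
    rw [hdP₁ x y hxy, hdP₁ y z hyz, hdP₁ x z hxz]
    calc (∑ k, d k (x k) (y k) ^ p) ^ (1 / p) + (∑ k, d k (y k) (z k) ^ p) ^ (1 / p)
        ≤ (∑ k, (d k (x k) (y k) + d k (y k) (z k)) ^ p) ^ (1 / p) :=
          rev_minkowski hp0 hp1 _ _
      _ ≤ (∑ k, d k (x k) (z k) ^ p) ^ (1 / p) := by
          apply ENNReal.rpow_le_rpow _ (by positivity)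
          apply Finset.sum_le_sum
          intro k _
          exact ENNReal.rpow_le_rpow
            (hrev k _ _ _ ((hleP x y).mp hxy k) ((hleP y z).mp hyz k)) (le_of_lt hp0)
  · -- upper semicontinuity
    set S : (∀ k, X k) × (∀ k, X k) → ℝ≥0∞ :=
      fun q => (∑ k, (d k (q.1 k) (q.2 k)) ^ p) ^ (1 / p) with hS
    have hSusc : UpperSemicontinuous S := by
      apply Continuous.comp_upperSemicontinuous (g := fun x : ℝ≥0∞ => x ^ (1/p))
      · exact ENNReal.continuous_rpow_const
      · apply upperSemicontinuous_sum
        intro k _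
        apply Continuous.comp_upperSemicontinuous (g := fun x : ℝ≥0∞ => x ^ p)
        · exact ENNReal.continuous_rpow_const
        · exact UpperSemicontinuous.comp (husc k)
            (continuous_apply k |>.comp continuous_fst |>.prodMk
              (continuous_apply k |>.comp continuous_snd))
        · exact fun a b hab => ENNReal.rpow_le_rpow hab (le_of_lt hp0)
      · exact fun a b hab => ENNReal.rpow_le_rpow hab (by positivity)
    have hC : IsClosed {q : (∀ k, X k) × (∀ k, X k) | leP q.1 q.2} := by
      have : {q : (∀ k, X k) × (∀ k, X k) | leP q.1 q.2}
          = ⋂ k, (fun q : (∀ k, X k) × (∀ k, X k) => (q.1 k, q.2 k)) ⁻¹'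
              {r : X k × X k | le k r.1 r.2} := by
        ext q
        simp [hleP]
      rw [this]
      exact isClosed_iInter fun k =>
        (hclosed k).preimage
          (continuous_apply k |>.comp continuous_fst |>.prodMk
            (continuous_apply k |>.comp continuous_snd))
    have hle : ∀ q : (∀ k, X k) × (∀ k, X k), dP q.1 q.2 ≤ S q := by
      intro q
      by_cases h : leP q.1 q.2
      · rw [hdP₁ _ _ h]
      · rw [hdP₂ _ _ h]; exact zero_le
    intro q y hy
    have hy' : dP q.1 q.2 < y := hy
    by_cases hq : leP q.1 q.2
    · rw [hdP₁ _ _ hq] at hy'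
      have : ∀ᶠ q' in nhds q, S q' < y := hSusc q y hy'
      filter_upwards [this] with q' hq'
      exact lt_of_le_of_lt (hle q') hq'
    · rw [hdP₂ _ _ hq] at hy'
      have : ∀ᶠ q' in nhds q, ¬ leP q'.1 q'.2 :=
        hC.isOpen_compl.eventually_mem (by exact hq)
      filter_upwards [this] with q' hq'
      show dP q'.1 q'.2 < y
      rw [hdP₂ _ _ hq']
      exact hy'
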